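/- arXiv:1809.00452 — 5 statements merged into one kernel-verified Lean document; each statement's English description precedes it below -/
import Mathlib

section
/- (Exact expansion of the Fock energy; core of Lemma 5.1.) Let V : ℂ^{n×n} → ℂ^{n×n} be ℂ-linear, self-adjoint with respect to the Frobenius inner product (⟨V(D₁), D₂⟩ = ⟨V(D₂), D₁⟩ for all D₁, D₂), and Hermitian-preserving (D* = D implies (V(D))* = V(D)). Define E_f(Y) := (1/4) Re⟨V(YY*), YY*⟩ for Y ∈ ℂ^{n×p}. Then for all X, U ∈ ℂ^{n×p}, with D := XU* + UX*, one has the exact identity E_f(X + U) = E_f(X) + Re⟨V(XX*)X, U⟩ + (1/2) Re⟨V(XX*)U + V(D)X, U⟩ + (1/2) Re⟨V(D)U, U⟩ + (1/4) Re⟨V(UU*), UU*⟩. -/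
open Matrix

/-- The Fock exchange energy `E_f(Y) = (1/4) Re⟨V(YY*), YY*⟩`. -/
noncomputable def fockEnergy {n p : ℕ}
    (V : Matrix (Fin n) (Fin n) ℂ →ₗ[ℂ] Matrix (Fin n) (Fin n) ℂ)
    (Y : Matrix (Fin n) (Fin p) ℂ) : ℝ :=
  (1 / 4) * (((V (Y * Yᴴ))ᴴ * (Y * Yᴴ)).trace).re

/-- `Re⟨M, XU* + UX*⟩ = 2 Re⟨MX, U⟩` for Hermitian `M`. -/
lemma fock_key1 {n p : ℕ} (M : Matrix (Fin n) (Fin n) ℂ) (hM : Mᴴ = M)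
    (X U : Matrix (Fin n) (Fin p) ℂ) :
    ((Mᴴ * (X * Uᴴ + U * Xᴴ)).trace).re = 2 * (((M * X)ᴴ * U).trace).re := by
  have h1 : ((M * X)ᴴ * U).trace = (Mᴴ * (U * Xᴴ)).trace := by
    rw [conjTranspose_mul, Matrix.mul_assoc, Matrix.trace_mul_comm, Matrix.mul_assoc]
  have h2 : (Mᴴ * (X * Uᴴ)).trace = star ((Mᴴ * (U * Xᴴ)).trace) := by
    rw [← Matrix.trace_conjTranspose]
    rw [conjTranspose_mul, conjTranspose_mul, conjTranspose_conjTranspose,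
      conjTranspose_conjTranspose, hM, Matrix.trace_mul_comm, ← hM]
  rw [mul_add, Matrix.trace_add, Complex.add_re, h1, h2, Complex.star_def,
    Complex.conj_re]
  ring

/-- `⟨MU, U⟩ = ⟨M, UU*⟩` (cyclicity of the trace). -/
lemma fock_key2 {n p : ℕ} (M : Matrix (Fin n) (Fin n) ℂ)
    (U : Matrix (Fin n) (Fin p) ℂ) :
    ((M * U)ᴴ * U).trace = (Mᴴ * (U * Uᴴ)).trace := by
  rw [conjTranspose_mul, Matrix.mul_assoc, Matrix.trace_mul_comm, Matrix.mul_assoc]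

/-- Exact expansion of the Fock energy `E_f(X + U)` (core of Lemma 5.1):
with `D := XU* + UX*`,
`E_f(X+U) = E_f(X) + Re⟨V(XX*)X, U⟩ + (1/2)Re⟨V(XX*)U + V(D)X, U⟩
  + (1/2)Re⟨V(D)U, U⟩ + (1/4)Re⟨V(UU*), UU*⟩`. -/
theorem fockEnergy_expansion (n p : ℕ)
    (V : Matrix (Fin n) (Fin n) ℂ →ₗ[ℂ] Matrix (Fin n) (Fin n) ℂ)
    (hsym : ∀ D₁ D₂ : Matrix (Fin n) (Fin n) ℂ,
      ((V D₁)ᴴ * D₂).trace = ((V D₂)ᴴ * D₁).trace)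
    (hherm : ∀ D : Matrix (Fin n) (Fin n) ℂ, Dᴴ = D → (V D)ᴴ = V D)
    (X U : Matrix (Fin n) (Fin p) ℂ) :
    fockEnergy V (X + U)
      = fockEnergy V X
        + (((V (X * Xᴴ) * X)ᴴ * U).trace).re
        + (1 / 2) * (((V (X * Xᴴ) * U + V (X * Uᴴ + U * Xᴴ) * X)ᴴ * U).trace).re
        + (1 / 2) * (((V (X * Uᴴ + U * Xᴴ) * U)ᴴ * U).trace).re
        + (1 / 4) * (((V (U * Uᴴ))ᴴ * (U * Uᴴ)).trace).re := by
  unfold fockEnergy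
  set P := X * Xᴴ with hPdef
  set Q := X * Uᴴ + U * Xᴴ with hQdef
  set R := U * Uᴴ with hRdef
  have hP : Pᴴ = P := by
    rw [hPdef, conjTranspose_mul, conjTranspose_conjTranspose]
  have hQ : Qᴴ = Q := by
    rw [hQdef, conjTranspose_add, conjTranspose_mul, conjTranspose_mul,
      conjTranspose_conjTranspose, conjTranspose_conjTranspose, add_comm]
  have hVP := hherm P hP
  have hVQ := hherm Q hQ
  have hS : (X + U) * (X + U)ᴴ = P + Q + R := by
    rw [conjTranspose_add, Matrix.add_mul, Matrix.mul_add, Matrix.mul_add]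
    rw [hPdef, hQdef, hRdef]; abel
  rw [hS]
  have f1 := fock_key1 (V P) hVP X U
  have f2 := fock_key1 (V Q) hVQ X U
  have f3 := fock_key2 (V P) U
  have f4 := fock_key2 (V Q) U
  rw [← hQdef] at f1 f2
  have hQP := hsym Q P
  have hRP := hsym R P
  have hRQ := hsym R Q
  simp only [map_add, conjTranspose_add, Matrix.add_mul, Matrix.mul_add,
    Matrix.trace_add, Complex.add_re, f3, f4, hQP, hRP, hRQ]
  rw [show (((V P)ᴴ * Q).trace).re = 2 * (((V P * X)ᴴ * U).trace).re from f1,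
    show (((V Q)ᴴ * Q).trace).re = 2 * (((V Q * X)ᴴ * U).trace).re from f2]
  ring
end

section
/- (Gradient of the Fock energy; Lemma 5.1, first part.) Let V : ℂ^{n×n} → ℂ^{n×n} be an ℝ-continuous ℂ-linear map that is self-adjoint with respect to the Frobenius inner product (⟨V(D₁), D₂⟩ = ⟨V(D₂), D₁⟩ for all D₁, D₂) and Hermitian-preserving (D* = D implies (V(D))* = V(D)). Define E_f : ℂ^{n×p} → ℝ by E_f(Y) := (1/4) Re⟨V(YY*), YY*⟩, viewing ℂ^{n×p} as a real normed vector space. Then at every X ∈ ℂ^{n×p}, E_f is Fréchet differentiable with derivative U ↦ Re⟨V(XX*)X, U⟩; that is, the Euclidean gradient of E_f at X with respect to the real inner product (A,B) ↦ Re tr(A*B) is ∇E_f(X) = V(XX*)X. -/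
open Matrix

set_option maxRecDepth 8000

attribute [local instance] Matrix.frobeniusNormedAddCommGroup Matrix.frobeniusNormedSpace

/-- Real-linear functional `U ↦ Re tr(Aᴴ U)`. -/
noncomputable def reInnerL {m k : ℕ} (A : Matrix (Fin m) (Fin k) ℂ) :
    Matrix (Fin m) (Fin k) ℂ →ₗ[ℝ] ℝ where
  toFun U := ((Aᴴ * U).trace).re
  map_add' U₁ U₂ := by simp [Matrix.mul_add]
  map_smul' r U := by
    simp [Matrix.mul_smul, Matrix.trace_smul, Complex.smul_re]

/-- Real-bilinear map `(D₁, D₂) ↦ Re tr((V D₁)ᴴ D₂)`. -/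
noncomputable def qV {n : ℕ}
    (V : Matrix (Fin n) (Fin n) ℂ →ₗ[ℂ] Matrix (Fin n) (Fin n) ℂ) :
    Matrix (Fin n) (Fin n) ℂ →ₗ[ℝ] Matrix (Fin n) (Fin n) ℂ →ₗ[ℝ] ℝ where
  toFun D := reInnerL (V D)
  map_add' D₁ D₂ := by
    ext U
    simp [reInnerL, Matrix.conjTranspose_add, Matrix.add_mul]
  map_smul' r D := by
    ext U
    have h : V (r • D) = r • V D := LinearMap.map_smul_of_tower V r D
    simp [reInnerL, h, Matrix.conjTranspose_smul, Matrix.smul_mul,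
      Matrix.trace_smul, Complex.smul_re]

/-- Real-bilinear map `(Y, Z) ↦ Y * Zᴴ`. -/
noncomputable def mulConjT {n p : ℕ} :
    Matrix (Fin n) (Fin p) ℂ →ₗ[ℝ] Matrix (Fin n) (Fin p) ℂ →ₗ[ℝ]
      Matrix (Fin n) (Fin n) ℂ where
  toFun Y :=
    { toFun := fun Z => Y * Zᴴ
      map_add' := fun Z₁ Z₂ => by simp [Matrix.conjTranspose_add, Matrix.mul_add]
      map_smul' := fun r Z => by
        simp [Matrix.conjTranspose_smul, Matrix.mul_smul] }
  map_add' Y₁ Y₂ := by ext Z; simp [Matrix.add_mul]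
  map_smul' r Y := by ext Z; simp [Matrix.smul_mul]

/-- Gradient of the Fock energy (Lemma 5.1, first part): `E_f` is Fréchet
differentiable at every `X`, with (real) derivative `U ↦ Re⟨V(XX*)X, U⟩`,
i.e. Euclidean gradient `∇E_f(X) = V(XX*)X`. -/
theorem fockEnergy_hasFDerivAt (n p : ℕ)
    (V : Matrix (Fin n) (Fin n) ℂ →ₗ[ℂ] Matrix (Fin n) (Fin n) ℂ)
    (hV : Continuous V)
    (hsym : ∀ D₁ D₂ : Matrix (Fin n) (Fin n) ℂ,
      ((V D₁)ᴴ * D₂).trace = ((V D₂)ᴴ * D₁).trace)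
    (hherm : ∀ D : Matrix (Fin n) (Fin n) ℂ, Dᴴ = D → (V D)ᴴ = V D)
    (X : Matrix (Fin n) (Fin p) ℂ) :
    ∃ f' : Matrix (Fin n) (Fin p) ℂ →L[ℝ] ℝ,
      (∀ U : Matrix (Fin n) (Fin p) ℂ,
          f' U = (((V (X * Xᴴ) * X)ᴴ * U).trace).re)
        ∧ HasFDerivAt (fockEnergy V) f' X := by
  classical
  let bc : Matrix (Fin n) (Fin n) ℂ →L[ℝ] Matrix (Fin n) (Fin n) ℂ →L[ℝ] ℝ :=
    LinearMap.toContinuousLinearMap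
      { toFun := fun D => LinearMap.toContinuousLinearMap (qV V D)
        map_add' := fun D₁ D₂ => by ext U; simp
        map_smul' := fun r D => by ext U; simp }
  let Bc : Matrix (Fin n) (Fin p) ℂ →L[ℝ] Matrix (Fin n) (Fin p) ℂ →L[ℝ]
      Matrix (Fin n) (Fin n) ℂ :=
    LinearMap.toContinuousLinearMap
      { toFun := fun Y => LinearMap.toContinuousLinearMap (mulConjT Y)
        map_add' := fun Y₁ Y₂ => by ext Z; simp
        map_smul' := fun r Y => by ext Z; simp }
  have hBc := Bc.isBoundedBilinearMap.hasFDerivAt (X, X)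
  have hdiag : HasFDerivAt (fun Y : Matrix (Fin n) (Fin p) ℂ => (Y, Y))
      ((ContinuousLinearMap.id ℝ _).prod (ContinuousLinearMap.id ℝ _)) X :=
    (hasFDerivAt_id X).prodMk (hasFDerivAt_id X)
  set Lg : Matrix (Fin n) (Fin p) ℂ →L[ℝ] Matrix (Fin n) (Fin n) ℂ :=
    (Bc.isBoundedBilinearMap.deriv (X, X)).comp
      ((ContinuousLinearMap.id ℝ _).prod (ContinuousLinearMap.id ℝ _)) with hLg
  have hg : HasFDerivAt (fun Y : Matrix (Fin n) (Fin p) ℂ => Bc Y Y) Lg X :=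
    HasFDerivAt.comp (f := fun Y : Matrix (Fin n) (Fin p) ℂ => (Y, Y)) X hBc hdiag
  have hg2 : HasFDerivAt (fun Y : Matrix (Fin n) (Fin p) ℂ => (Bc Y Y, Bc Y Y))
      (Lg.prod Lg) X := hg.prodMk hg
  have hbc := bc.isBoundedBilinearMap.hasFDerivAt (Bc X X, Bc X X)
  have hF : HasFDerivAt (fun Y : Matrix (Fin n) (Fin p) ℂ => bc (Bc Y Y) (Bc Y Y))
      ((bc.isBoundedBilinearMap.deriv (Bc X X, Bc X X)).comp (Lg.prod Lg)) X :=
    HasFDerivAt.comp (f := fun Y : Matrix (Fin n) (Fin p) ℂ => (Bc Y Y, Bc Y Y)) X hbc hg2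
  have hFc := hF.const_mul (1 / 4 : ℝ)
  let φ : Matrix (Fin n) (Fin p) ℂ →L[ℝ] ℝ :=
    LinearMap.toContinuousLinearMap (reInnerL (V (X * Xᴴ) * X))
  refine ⟨φ, fun U => by simp [φ, reInnerL], ?_⟩
  have hfun : fockEnergy V
      = fun Y : Matrix (Fin n) (Fin p) ℂ => (1 / 4 : ℝ) * bc (Bc Y Y) (Bc Y Y) := by
    funext Y
    simp [fockEnergy, bc, Bc, qV, mulConjT, reInnerL]
  rw [hfun]
  have hφ : φ = (1 / 4 : ℝ) •
      ((bc.isBoundedBilinearMap.deriv (Bc X X, Bc X X)).comp (Lg.prod Lg)) := by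
    ext U
    have hBXX : Bc X X = X * Xᴴ := by simp [Bc, mulConjT]
    have hLgU : Lg U = U * Xᴴ + X * Uᴴ := by
      change Bc X U + Bc U X = _
      simp [Bc, mulConjT]
      abel
    simp only [ContinuousLinearMap.smul_apply, ContinuousLinearMap.comp_apply,
      ContinuousLinearMap.prod_apply, IsBoundedBilinearMap.deriv_apply, smul_eq_mul]
    change φ U = 1 / 4 * (bc (Bc X X) (Lg U) + bc (Lg U) (Bc X X))
    rw [hBXX, hLgU]
    have hbcval : ∀ D₁ D₂ : Matrix (Fin n) (Fin n) ℂ,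
        bc D₁ D₂ = (((V D₁)ᴴ * D₂).trace).re := by
      intro D₁ D₂; simp [bc, qV, reInnerL]
    rw [hbcval, hbcval]
    have hφval : φ U = (((V (X * Xᴴ) * X)ᴴ * U).trace).re := by
      simp [φ, reInnerL]
    rw [hφval]
    -- now pure trace algebra
    set W := V (X * Xᴴ) with hWdef
    have hW : Wᴴ = W := hherm _ (by simp [Matrix.conjTranspose_mul])
    have hsym' : ((V (U * Xᴴ + X * Uᴴ))ᴴ * (X * Xᴴ)).trace
        = (Wᴴ * (U * Xᴴ + X * Uᴴ)).trace := hsym _ _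
    have ht1 : (Wᴴ * (U * Xᴴ)).trace = ((W * X)ᴴ * U).trace := by
      rw [Matrix.conjTranspose_mul]
      rw [← Matrix.mul_assoc, Matrix.trace_mul_comm, ← Matrix.mul_assoc]
    have ht2 : ((Wᴴ * (X * Uᴴ)).trace).re = (((W * X)ᴴ * U).trace).re := by
      have : (Wᴴ * (X * Uᴴ)).trace = star (((U * Xᴴ) * W).trace) := by
        rw [← Matrix.trace_conjTranspose]
        congr 1
        simp [Matrix.conjTranspose_mul, Matrix.mul_assoc, hW]
      rw [this]
      have h3 : ((U * Xᴴ) * W).trace = ((W * X)ᴴ * U).trace := by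
        rw [Matrix.mul_assoc, Matrix.trace_mul_comm, Matrix.conjTranspose_mul, hW]
      rw [h3]
      simp [Complex.conj_re]
    rw [hsym']
    rw [Matrix.mul_add, Matrix.trace_add]
    simp only [Complex.add_re]
    rw [ht1]
    linarith [ht2]
  rw [hφ]
  exact hFc
end

section
/- (Hessian of the Fock energy along a direction; Lemma 5.1, second part.) Let V : ℂ^{n×n} → ℂ^{n×n} be ℂ-linear, self-adjoint with respect to the Frobenius inner product (⟨V(D₁), D₂⟩ = ⟨V(D₂), D₁⟩ for all D₁, D₂) and Hermitian-preserving (D* = D implies (V(D))* = V(D)). Define E_f(Y) := (1/4) Re⟨V(YY*), YY*⟩. Fix X, U ∈ ℂ^{n×p} and let g : ℝ → ℝ, g(t) := E_f(X + tU). Then g is a polynomial in t of degree at most 4, g'(0) = Re⟨V(XX*)X, U⟩, and g''(0) = Re⟨V(XX*)U + V(XU* + UX*)X, U⟩; i.e., the Euclidean Hessian of E_f at X applied to U is ∇²E_f(X)[U] = V(XX*)U + V(XU* + UX*)X. -/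
open Matrix

/-- Hessian of the Fock energy along a direction (Lemma 5.1, second part):
`g(t) = E_f(X + tU)` is a polynomial of degree at most 4 in `t`, with
`g'(0) = Re⟨V(XX*)X, U⟩` and
`g''(0) = Re⟨V(XX*)U + V(XU* + UX*)X, U⟩`. -/
theorem fockEnergy_second_directional_derivative (n p : ℕ)
    (V : Matrix (Fin n) (Fin n) ℂ →ₗ[ℂ] Matrix (Fin n) (Fin n) ℂ)
    (hsym : ∀ D₁ D₂ : Matrix (Fin n) (Fin n) ℂ,
      ((V D₁)ᴴ * D₂).trace = ((V D₂)ᴴ * D₁).trace)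
    (hherm : ∀ D : Matrix (Fin n) (Fin n) ℂ, Dᴴ = D → (V D)ᴴ = V D)
    (X U : Matrix (Fin n) (Fin p) ℂ) :
    (∃ a₀ a₁ a₂ a₃ a₄ : ℝ, ∀ t : ℝ,
        fockEnergy V (X + t • U)
          = a₀ + a₁ * t + a₂ * t ^ 2 + a₃ * t ^ 3 + a₄ * t ^ 4)
      ∧ deriv (fun t : ℝ => fockEnergy V (X + t • U)) 0
          = (((V (X * Xᴴ) * X)ᴴ * U).trace).re
      ∧ deriv (deriv (fun t : ℝ => fockEnergy V (X + t • U))) 0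
          = (((V (X * Xᴴ) * U + V (X * Uᴴ + U * Xᴴ) * X)ᴴ * U).trace).re := by
  set A := X * Xᴴ with hA
  set B := X * Uᴴ + U * Xᴴ with hB
  set C := U * Uᴴ with hC
  have hAh : Aᴴ = A := by simp [hA, conjTranspose_mul]
  have hBh : Bᴴ = B := by simp [hB, conjTranspose_mul, add_comm]
  have hCh : Cᴴ = C := by simp [hC, conjTranspose_mul]
  have hVA : (V A)ᴴ = V A := hherm A hAh
  have hVB : (V B)ᴴ = V B := hherm B hBh
  have hVC : (V C)ᴴ = V C := hherm C hCh
  set e₀ : ℂ := ((V A)ᴴ * A).trace with he0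
  set e₁ : ℂ := ((V A)ᴴ * B).trace + ((V B)ᴴ * A).trace with he1
  set e₂ : ℂ := ((V A)ᴴ * C).trace + ((V B)ᴴ * B).trace + ((V C)ᴴ * A).trace with he2
  set e₃ : ℂ := ((V B)ᴴ * C).trace + ((V C)ᴴ * B).trace with he3
  set e₄ : ℂ := ((V C)ᴴ * C).trace with he4
  set a₀ : ℝ := (1/4) * e₀.re with ha0
  set a₁ : ℝ := (1/4) * e₁.re with ha1
  set a₂ : ℝ := (1/4) * e₂.re with ha2
  set a₃ : ℝ := (1/4) * e₃.re with ha3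
  set a₄ : ℝ := (1/4) * e₄.re with ha4
  have hmat : ∀ t : ℝ, (X + t • U) * (X + t • U)ᴴ = A + (t:ℂ) • B + ((t:ℂ)^2) • C := by
    intro t
    have h1 : (t : ℝ) • U = (t:ℂ) • U := by ext i j; simp [Complex.real_smul]
    rw [h1, hA, hB, hC]
    simp only [conjTranspose_add, conjTranspose_smul, Complex.star_def, Complex.conj_ofReal,
      Matrix.add_mul, Matrix.mul_add, Matrix.smul_mul, Matrix.mul_smul, smul_add, smul_smul, sq]
    abel
  have key : ∀ t : ℝ, fockEnergy V (X + t • U)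
      = a₀ + a₁ * t + a₂ * t ^ 2 + a₃ * t ^ 3 + a₄ * t ^ 4 := by
    intro t
    have htr : ((V ((X + t • U) * (X + t • U)ᴴ))ᴴ * ((X + t • U) * (X + t • U)ᴴ)).trace
        = e₀ + e₁ * (t:ℂ) + e₂ * (t:ℂ)^2 + e₃ * (t:ℂ)^3 + e₄ * (t:ℂ)^4 := by
      rw [hmat t]
      simp only [map_add, _root_.map_smul, conjTranspose_add, conjTranspose_smul,
        star_pow, Complex.star_def, Complex.conj_ofReal,
        Matrix.add_mul, Matrix.mul_add, Matrix.smul_mul, Matrix.mul_smul,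
        trace_add, trace_smul, smul_eq_mul, he0, he1, he2, he3, he4]
      ring
    have hh : fockEnergy V (X + t • U)
        = (1/4) * (e₀ + e₁ * (t:ℂ) + e₂ * (t:ℂ)^2 + e₃ * (t:ℂ)^3 + e₄ * (t:ℂ)^4).re := by
      rw [fockEnergy, htr]
    rw [hh, ha0, ha1, ha2, ha3, ha4]
    simp only [Complex.add_re, Complex.mul_re, ← Complex.ofReal_pow,
      Complex.ofReal_re, Complex.ofReal_im]
    ring
  have hd1 : ∀ x : ℝ, HasDerivAt (fun t : ℝ => a₀ + a₁ * t + a₂ * t ^ 2 + a₃ * t ^ 3 + a₄ * t ^ 4)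
      (a₁ + 2 * a₂ * x + 3 * a₃ * x ^ 2 + 4 * a₄ * x ^ 3) x := by
    intro x
    have h : HasDerivAt (fun t : ℝ => a₀ + a₁ * t + a₂ * t ^ 2 + a₃ * t ^ 3 + a₄ * t ^ 4)
        (0 + a₁ * 1 + a₂ * (↑2 * x ^ 1) + a₃ * (↑3 * x ^ 2) + a₄ * (↑4 * x ^ 3)) x :=
      ((((hasDerivAt_const x a₀).add ((hasDerivAt_id x).const_mul a₁)).add
        ((hasDerivAt_pow 2 x).const_mul a₂)).add
        ((hasDerivAt_pow 3 x).const_mul a₃)).add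
        ((hasDerivAt_pow 4 x).const_mul a₄)
    convert h using 1
    ring
  have hd2 : ∀ x : ℝ, HasDerivAt (fun x : ℝ => a₁ + 2 * a₂ * x + 3 * a₃ * x ^ 2 + 4 * a₄ * x ^ 3)
      (2 * a₂ + 6 * a₃ * x + 12 * a₄ * x ^ 2) x := by
    intro x
    have h : HasDerivAt (fun x : ℝ => a₁ + 2 * a₂ * x + 3 * a₃ * x ^ 2 + 4 * a₄ * x ^ 3)
        (0 + 2 * a₂ * 1 + 3 * a₃ * (↑2 * x ^ 1) + 4 * a₄ * (↑3 * x ^ 2)) x :=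
      (((hasDerivAt_const x a₁).add ((hasDerivAt_id x).const_mul (2 * a₂))).add
        ((hasDerivAt_pow 2 x).const_mul (3 * a₃))).add
        ((hasDerivAt_pow 3 x).const_mul (4 * a₄))
    convert h using 1
    ring
  have hfun : (fun t : ℝ => fockEnergy V (X + t • U))
      = fun t : ℝ => a₀ + a₁ * t + a₂ * t ^ 2 + a₃ * t ^ 3 + a₄ * t ^ 4 := funext key
  have hderiv1 : deriv (fun t : ℝ => fockEnergy V (X + t • U))
      = fun x : ℝ => a₁ + 2 * a₂ * x + 3 * a₃ * x ^ 2 + 4 * a₄ * x ^ 3 := by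
    rw [hfun]; funext x; exact (hd1 x).deriv
  have hccycle : ∀ (P : Matrix (Fin n) (Fin n) ℂ), Pᴴ = P →
      (P * (X * Uᴴ)).trace = star ((Xᴴ * (P * U)).trace) ∧
      (P * (U * Xᴴ)).trace = (Xᴴ * (P * U)).trace := by
    intro P hP
    constructor
    · calc (P * (X * Uᴴ)).trace = (Uᴴ * P * X).trace := by
            rw [← Matrix.mul_assoc, Matrix.trace_mul_comm, ← Matrix.mul_assoc]
      _ = ((Xᴴ * (P * U))ᴴ).trace := by
            rw [conjTranspose_mul, conjTranspose_mul, conjTranspose_conjTranspose, hP]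
      _ = star ((Xᴴ * (P * U)).trace) := trace_conjTranspose _
    · rw [← Matrix.mul_assoc, Matrix.trace_mul_comm]
  set z₁ : ℂ := (Xᴴ * (V A * U)).trace with hz1d
  set z₂ : ℂ := (Xᴴ * (V B * U)).trace with hz2d
  set w : ℂ := (Uᴴ * (V A * U)).trace with hwd
  have hVAB : (V A * B).trace = star z₁ + z₁ := by
    rw [hB, Matrix.mul_add, trace_add, (hccycle (V A) hVA).1, (hccycle (V A) hVA).2]
  have hVBB : (V B * B).trace = star z₂ + z₂ := by
    rw [hB, Matrix.mul_add, trace_add, (hccycle (V B) hVB).1, (hccycle (V B) hVB).2]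
  have hVAC : (V A * C).trace = w := by
    rw [hC, ← Matrix.mul_assoc, Matrix.trace_mul_comm]
  have he1' : e₁ = 2 * (star z₁ + z₁) := by
    rw [he1, hsym B A, hVA, hVAB]; ring
  have he2' : e₂ = 2 * w + (star z₂ + z₂) := by
    rw [he2, hsym C A, hVA, hVB, hVAC, hVBB]; ring
  have htgt1 : ((V A * X)ᴴ * U).trace = z₁ := by
    rw [conjTranspose_mul, hVA, Matrix.mul_assoc]
  have htgt2 : ((V A * U + V B * X)ᴴ * U).trace = w + z₂ := by
    rw [conjTranspose_add, Matrix.add_mul, trace_add, conjTranspose_mul, conjTranspose_mul,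
      hVA, hVB, Matrix.mul_assoc, Matrix.mul_assoc]
  refine ⟨⟨a₀, a₁, a₂, a₃, a₄, key⟩, ?_, ?_⟩
  · rw [hderiv1]
    have h0 : (fun x : ℝ => a₁ + 2 * a₂ * x + 3 * a₃ * x ^ 2 + 4 * a₄ * x ^ 3) 0 = a₁ := by
      norm_num
    rw [h0, htgt1, ha1, he1']
    simp only [Complex.add_re, Complex.mul_re, Complex.add_im, Complex.mul_im,
      Complex.star_def, Complex.conj_re, Complex.conj_im]
    norm_num
    ring
  · rw [hderiv1]
    have h1 : deriv (fun x : ℝ => a₁ + 2 * a₂ * x + 3 * a₃ * x ^ 2 + 4 * a₄ * x ^ 3) 0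
        = 2 * a₂ + 6 * a₃ * 0 + 12 * a₄ * 0 ^ 2 := (hd2 0).deriv
    have h0 : (2 * a₂ + 6 * a₃ * 0 + 12 * a₄ * 0 ^ 2) = 2 * a₂ := by ring
    rw [h1, h0, htgt2, ha2, he2']
    simp only [Complex.add_re, Complex.mul_re, Complex.add_im, Complex.mul_im,
      Complex.star_def, Complex.conj_re, Complex.conj_im]
    norm_num
    ring
end

section
/- Let E ∈ ℝ^{n×n} be symmetric with EX = 0, and let X, Z ∈ ℝ^{n×p} satisfy XᵀX = ZᵀZ = I_p. Then tr(E ZZᵀ) = tr(E (ZZᵀ − XXᵀ)²). (This is the key identity ⟨C − C^k, Z^k(Z^k)ᵀ⟩ = ⟨C − C^k, (Z^k(Z^k)ᵀ − X^k(X^k)ᵀ)²⟩ used in the proof of the global convergence theorem for the structured quasi-Newton method applied to the linear eigenvalue problem, valid because the approximation C^k agrees with C on X^k.) -/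
open Matrix

/-- If `E` is symmetric with `EX = 0` and `X, Z` have orthonormal columns, then
`tr(E ZZᵀ) = tr(E (ZZᵀ − XXᵀ)²)`. -/
theorem trace_key_identity (n p : ℕ)
    (E : Matrix (Fin n) (Fin n) ℝ) (hE : Eᵀ = E)
    (X Z : Matrix (Fin n) (Fin p) ℝ)
    (hEX : E * X = 0) (hX : Xᵀ * X = 1) (hZ : Zᵀ * Z = 1) :
    (E * (Z * Zᵀ)).trace
      = (E * ((Z * Zᵀ - X * Xᵀ) * (Z * Zᵀ - X * Xᵀ))).trace := by
  have hXE : Xᵀ * E = 0 := by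
    have := congrArg Matrix.transpose hEX
    simpa [Matrix.transpose_mul, hE] using this
  have hEXX : E * (X * Xᵀ) = 0 := by
    rw [← Matrix.mul_assoc, hEX, Matrix.zero_mul]
  have hZZZ : (Z * Zᵀ) * (Z * Zᵀ) = Z * Zᵀ := by
    rw [Matrix.mul_assoc, ← Matrix.mul_assoc Zᵀ, hZ, Matrix.one_mul]
  have hexp : E * ((Z * Zᵀ - X * Xᵀ) * (Z * Zᵀ - X * Xᵀ))
      = E * (Z * Zᵀ) - E * ((Z * Zᵀ) * (X * Xᵀ)) := by
    rw [Matrix.sub_mul, Matrix.mul_sub, Matrix.mul_sub, Matrix.mul_sub, hZZZ,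
      ← Matrix.mul_assoc E (X * Xᵀ), hEXX]
    simp [Matrix.mul_assoc]
  rw [hexp, Matrix.trace_sub]
  have h2 : (E * ((Z * Zᵀ) * (X * Xᵀ))).trace = 0 := by
    have : E * ((Z * Zᵀ) * (X * Xᵀ)) = (E * (Z * Zᵀ) * X) * Xᵀ := by
      simp [Matrix.mul_assoc]
    rw [this, Matrix.trace_mul_comm, ← Matrix.mul_assoc, ← Matrix.mul_assoc, hXE]
    simp
  rw [h2, sub_zero]
end

section
/- (The regularized subproblem is a linear eigenvalue problem.) Let X, X^k ∈ ℝ^{n×p} satisfy XᵀX = (X^k)ᵀX^k = I_p, let C^k ∈ ℝ^{n×n}, and let τ ∈ ℝ. Then (1/2)tr(XᵀC^kX) + (τ/4)‖XXᵀ − X^k(X^k)ᵀ‖_F² = (1/2)tr(Xᵀ(C^k − τX^k(X^k)ᵀ)X) + τp/2. Hence minimizing the regularized model over the Stiefel manifold is equivalent to minimizing (1/2)tr(Xᵀ(C^k − τX^k(X^k)ᵀ)X) over XᵀX = I_p, i.e., to computing the p smallest eigenvalues of the shifted matrix C^k − τX^k(X^k)ᵀ. -/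
open Matrix

/-- The regularized subproblem is a linear eigenvalue problem: on the Stiefel
manifold, `(1/2)tr(XᵀC^kX) + (τ/4)‖XXᵀ − X^k(X^k)ᵀ‖_F²
  = (1/2)tr(Xᵀ(C^k − τX^k(X^k)ᵀ)X) + τp/2`. -/
theorem model_is_shifted_eigenproblem (n p : ℕ)
    (Ck : Matrix (Fin n) (Fin n) ℝ) (τ : ℝ)
    (X Xk : Matrix (Fin n) (Fin p) ℝ)
    (hX : Xᵀ * X = 1) (hXk : Xkᵀ * Xk = 1) :
    (1 / 2) * (Xᵀ * Ck * X).trace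
        + (τ / 4) * ((X * Xᵀ - Xk * Xkᵀ)ᵀ * (X * Xᵀ - Xk * Xkᵀ)).trace
      = (1 / 2) * (Xᵀ * (Ck - τ • (Xk * Xkᵀ)) * X).trace + τ * p / 2 := by
  have h1 : (X * Xᵀ * (X * Xᵀ)).trace = (p : ℝ) := by
    have e : X * Xᵀ * (X * Xᵀ) = X * ((Xᵀ * X) * Xᵀ) := by
      rw [Matrix.mul_assoc, Matrix.mul_assoc]
    rw [e, hX, Matrix.one_mul, trace_mul_comm, hX, trace_one]
    simp
  have h2 : (Xk * Xkᵀ * (Xk * Xkᵀ)).trace = (p : ℝ) := by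
    have e : Xk * Xkᵀ * (Xk * Xkᵀ) = Xk * ((Xkᵀ * Xk) * Xkᵀ) := by
      rw [Matrix.mul_assoc, Matrix.mul_assoc]
    rw [e, hXk, Matrix.one_mul, trace_mul_comm, hXk, trace_one]
    simp
  have h4 : (X * Xᵀ * (Xk * Xkᵀ)).trace = (Xᵀ * (Xk * Xkᵀ) * X).trace := by
    simp only [Matrix.mul_assoc]
    rw [trace_mul_comm]
    simp only [Matrix.mul_assoc]
  have h3 : (Xk * Xkᵀ * (X * Xᵀ)).trace = (Xᵀ * (Xk * Xkᵀ) * X).trace := by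
    rw [trace_mul_comm]; exact h4
  simp only [transpose_sub, transpose_mul, transpose_transpose, Matrix.sub_mul,
    Matrix.mul_sub, trace_sub, Matrix.sub_mul, Matrix.mul_smul, Matrix.smul_mul,
    trace_smul, smul_eq_mul, h1, h2, h3, h4]
  ring
end
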